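/- Fix natural numbers n, l, d with d ≤ n, let u, v be vertices of Q_n with Hamming distance d, and let M_{n,l,d} denote the number of walks of length l from u to v in Q_n. Then for every real x > 0, M_{n,l,d} ≤ sinh(x)^d · cosh(x)^{n−d} · l! / x^l. -/

import Mathlib

open SimpleGraph Finset

/-- The `n`-dimensional hypercube graph: vertices are `{0,1}^n`, two vertices being adjacent
iff they differ in exactly one coordinate (Hamming distance `1`). -/
def cubeGraph (n : ℕ) : SimpleGraph (Fin n → Bool) where
  Adj u v := hammingDist u v = 1
  symm := ⟨fun u v h => by rwa [hammingDist_comm]⟩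
  loopless := ⟨fun u h => by simp [hammingDist_self] at h⟩

/-- The number of walks of length `l` from `u` to `v` in the `n`-dimensional hypercube. -/
noncomputable def walkCount (n l : ℕ) (u v : Fin n → Bool) : ℕ :=
  Nat.card {p : (cubeGraph n).Walk u v // p.length = l}

namespace StanleyAux

instance cubeAdjDecidable (n : ℕ) : DecidableRel (cubeGraph n).Adj :=
  fun u v => decidable_of_iff (hammingDist u v = 1) Iff.rfl

variable {n : ℕ}

/-- Flip coordinate `i`. -/
def flip (i : Fin n) (u : Fin n → Bool) : Fin n → Bool := Function.update u i (!u i)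

/-- Flip all coordinates in `S`. -/
def flipS (S : Finset (Fin n)) (u : Fin n → Bool) : Fin n → Bool :=
  fun j => if j ∈ S then !u j else u j

/-- Permutation matrix of flipping coordinate `i`. -/
def P (i : Fin n) : Matrix (Fin n → Bool) (Fin n → Bool) ℝ :=
  Matrix.of fun u v => if flip i u = v then 1 else 0

/-- Permutation matrix of flipping all coordinates in `S`. -/
def Q (S : Finset (Fin n)) : Matrix (Fin n → Bool) (Fin n → Bool) ℝ :=
  Matrix.of fun u v => if flipS S u = v then 1 else 0

lemma P_mul_apply (i : Fin n) (M : Matrix (Fin n → Bool) (Fin n → Bool) ℝ)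
    (u v : Fin n → Bool) : (P i * M) u v = M (flip i u) v := by
  simp [P, Matrix.mul_apply, ite_mul]

lemma flip_flip (i : Fin n) (u : Fin n → Bool) : flip i (flip i u) = u := by
  funext j
  by_cases hj : j = i
  · subst hj; simp [flip]
  · simp [flip, Function.update_apply, hj]

lemma flip_comm (i j : Fin n) (u : Fin n → Bool) : flip i (flip j u) = flip j (flip i u) := by
  by_cases hij : i = j
  · subst hij; rfl
  · funext a
    by_cases hi : a = i
    · subst hi; simp [flip, Function.update_apply, hij, Ne.symm hij]
    · by_cases hj : a = j
      · subst hj; simp [flip, Function.update_apply, hij, hi]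
      · simp [flip, Function.update_apply, hi, hj]

lemma P_commute (i j : Fin n) : Commute (P i) (P j) := by
  unfold Commute SemiconjBy
  ext u v
  rw [P_mul_apply, P_mul_apply]
  simp only [P, Matrix.of_apply]
  rw [flip_comm]

lemma P_sq (i : Fin n) : P i * P i = 1 := by
  ext u v
  rw [P_mul_apply]
  simp [P, flip_flip, Matrix.one_apply, eq_comm]

lemma P_pow (i : Fin n) (k : ℕ) : P i ^ k = if Odd k then P i else 1 := by
  induction k with
  | zero => simp
  | succ m ih =>
    rw [pow_succ, ih]
    rcases Nat.even_or_odd m with hm | hm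
    · simp [Nat.not_odd_iff_even.2 hm, Nat.odd_add_one, Nat.not_even_iff_odd.1, hm]
    · simp [hm, Nat.odd_add_one, Nat.not_odd_iff_even, hm.add_one, P_sq,
        Nat.not_even_iff_odd.2 hm]

lemma Q_empty : Q (∅ : Finset (Fin n)) = 1 := by
  have h : ∀ u : Fin n → Bool, flipS (∅ : Finset (Fin n)) u = u := by
    intro u; funext j; simp [flipS]
  ext u v
  simp [Q, h, Matrix.one_apply]

lemma P_mul_Q (a : Fin n) (T : Finset (Fin n)) (ha : a ∉ T) :
    P a * Q T = Q (insert a T) := by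
  ext u v
  rw [P_mul_apply]
  simp only [Q, Matrix.of_apply]
  have : flipS T (flip a u) = flipS (insert a T) u := by
    funext j
    by_cases hj : j = a
    · subst hj; simp [flipS, flip, ha]
    · simp [flipS, flip, Function.update_apply, hj, Finset.mem_insert]
  rw [this]

lemma noncommProd_P (S : Finset (Fin n)) (k : Fin n → ℕ)
    (h : (S : Set (Fin n)).Pairwise (Function.onFun Commute (fun i => P i ^ k i))) :
    S.noncommProd (fun i => P i ^ k i) h = Q (S.filter fun i => Odd (k i)) := by
  induction S using Finset.cons_induction with
  | empty => simp [Q_empty]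
  | cons a S ha ih =>
    rw [Finset.noncommProd_cons, ih, Finset.filter_cons, P_pow]
    by_cases hodd : Odd (k a)
    · rw [if_pos hodd, if_pos hodd, Finset.cons_eq_insert, P_mul_Q]
      simp [ha]
    · rw [if_neg hodd, if_neg hodd, one_mul]

lemma flipS_eq_iff (S : Finset (Fin n)) (u v : Fin n → Bool) :
    flipS S u = v ↔ S = Finset.univ.filter fun j => u j ≠ v j := by
  rw [funext_iff, Finset.ext_iff]
  apply forall_congr'
  intro j
  simp only [flipS, Finset.mem_filter, Finset.mem_univ, true_and]
  by_cases hj : j ∈ S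
  · simp only [hj, if_true, true_iff]
    cases hu : u j <;> cases hv : v j <;> simp
  · simp only [hj, if_false, false_iff]
    cases hu : u j <;> cases hv : v j <;> simp

lemma Q_apply (S : Finset (Fin n)) (u v : Fin n → Bool) :
    Q S u v = if S = Finset.univ.filter fun j => u j ≠ v j then 1 else 0 := by
  simp only [Q, Matrix.of_apply, flipS_eq_iff]

lemma flip_eq_flipS (i : Fin n) (u : Fin n → Bool) : flip i u = flipS {i} u := by
  funext j
  by_cases hj : j = i
  · subst hj; simp [flip, flipS]
  · simp [flip, flipS, Function.update_apply, hj]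

lemma adjMatrix_eq_sum_P :
    (cubeGraph n).adjMatrix ℝ = ∑ i, P i := by
  ext u v
  rw [Matrix.sum_apply]
  simp only [P, Matrix.of_apply, flip_eq_flipS, flipS_eq_iff]
  rw [SimpleGraph.adjMatrix_apply]
  have hadj : (cubeGraph n).Adj u v ↔
      (Finset.univ.filter fun j => u j ≠ v j).card = 1 := Iff.rfl
  by_cases h : (cubeGraph n).Adj u v
  · rw [if_pos h]
    obtain ⟨i₀, hi₀⟩ := Finset.card_eq_one.1 (hadj.1 h)
    rw [hi₀]
    have hsing : ∀ i : Fin n, (({i} : Finset (Fin n)) = ({i₀} : Finset (Fin n))) ↔ i = i₀ := by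
      intro i; exact Finset.singleton_inj
    simp only [hsing]
    simp
  · rw [if_neg h]
    symm
    apply Finset.sum_eq_zero
    intro i _
    rw [if_neg]
    intro hcon
    exact h (hadj.2 (by rw [← hcon]; simp))

lemma walkCount_eq (l : ℕ) (u v : Fin n → Bool) :
    (walkCount n l u v : ℝ) =
      ∑ k ∈ Finset.piAntidiag (Finset.univ : Finset (Fin n)) l,
        (Nat.multinomial Finset.univ k : ℝ) *
          (if (Finset.univ.filter fun i => Odd (k i)) =
              (Finset.univ.filter fun j => u j ≠ v j) then 1 else 0) := by
  have h1 : (walkCount n l u v : ℝ) = ((cubeGraph n).adjMatrix ℝ ^ l) u v := by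
    rw [SimpleGraph.adjMatrix_pow_apply_eq_card_walk]
    rw [walkCount, Nat.card_eq_fintype_card]
    norm_cast
  rw [h1, adjMatrix_eq_sum_P,
    Finset.sum_pow_eq_sum_piAntidiag_of_commute _ _
      (fun i _ j _ _ => P_commute i j)]
  rw [Matrix.sum_apply]
  apply Finset.sum_congr rfl
  intro k hk
  rw [noncommProd_P, ← nsmul_eq_mul, Matrix.smul_apply, nsmul_eq_mul, Q_apply]

lemma sum_le_sinh {x : ℝ} (hx : 0 ≤ x) (T : Finset ℕ) (hT : ∀ m ∈ T, Odd m) :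
    ∑ m ∈ T, x ^ m / m.factorial ≤ Real.sinh x := by
  have h1 : Summable (fun m : ℕ => x ^ m / m.factorial) := Real.summable_pow_div_factorial x
  have h2 : Summable (fun m : ℕ => (-x) ^ m / m.factorial) := Real.summable_pow_div_factorial _
  have hexp : ∀ y : ℝ, Real.exp y = ∑' m : ℕ, y ^ m / m.factorial := by
    intro y
    rw [Real.exp_eq_exp_ℝ, NormedSpace.exp_eq_tsum_div]
  have hpow : ∀ m : ℕ, (-x) ^ m ≤ x ^ m := by
    intro m
    calc (-x) ^ m ≤ |(-x) ^ m| := le_abs_self _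
      _ = |x| ^ m := by rw [abs_pow, abs_neg]
      _ = x ^ m := by rw [abs_of_nonneg hx]
  have hsinh : Real.sinh x = ∑' m : ℕ, (x ^ m / m.factorial - (-x) ^ m / m.factorial) / 2 := by
    rw [Real.sinh_eq, hexp x, hexp (-x), ← Summable.tsum_sub h1 h2, ← tsum_div_const]
  rw [hsinh]
  have hterm : ∀ m : ℕ, Odd m → (x ^ m / m.factorial - (-x) ^ m / m.factorial) / 2
      = x ^ m / m.factorial := by
    intro m hm
    rw [hm.neg_pow]
    ring
  calc ∑ m ∈ T, x ^ m / m.factorial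
      = ∑ m ∈ T, (x ^ m / m.factorial - (-x) ^ m / m.factorial) / 2 :=
        (Finset.sum_congr rfl fun m hm => (hterm m (hT m hm)).symm)
    _ ≤ ∑' m : ℕ, (x ^ m / m.factorial - (-x) ^ m / m.factorial) / 2 := by
        apply Summable.sum_le_tsum T
        · intro m _
          have hfac : (0:ℝ) < m.factorial := by positivity
          have hle : (-x) ^ m / (m.factorial : ℝ) ≤ x ^ m / m.factorial :=
            (div_le_div_iff_of_pos_right hfac).2 (hpow m)
          linarith
        · exact (h1.sub h2).div_const 2

lemma sum_le_cosh {x : ℝ} (hx : 0 ≤ x) (T : Finset ℕ) (hT : ∀ m ∈ T, ¬ Odd m) :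
    ∑ m ∈ T, x ^ m / m.factorial ≤ Real.cosh x := by
  have h1 : Summable (fun m : ℕ => x ^ m / m.factorial) := Real.summable_pow_div_factorial x
  have h2 : Summable (fun m : ℕ => (-x) ^ m / m.factorial) := Real.summable_pow_div_factorial _
  have hexp : ∀ y : ℝ, Real.exp y = ∑' m : ℕ, y ^ m / m.factorial := by
    intro y
    rw [Real.exp_eq_exp_ℝ, NormedSpace.exp_eq_tsum_div]
  have hpow : ∀ m : ℕ, -(x ^ m) ≤ (-x) ^ m := by
    intro m
    have : |(-x) ^ m| = x ^ m := by rw [abs_pow, abs_neg, abs_of_nonneg hx]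
    have h := neg_abs_le ((-x) ^ m)
    rwa [this] at h
  have hcosh : Real.cosh x = ∑' m : ℕ, (x ^ m / m.factorial + (-x) ^ m / m.factorial) / 2 := by
    rw [Real.cosh_eq, hexp x, hexp (-x), ← Summable.tsum_add h1 h2, ← tsum_div_const]
  rw [hcosh]
  have hterm : ∀ m : ℕ, ¬ Odd m → (x ^ m / m.factorial + (-x) ^ m / m.factorial) / 2
      = x ^ m / m.factorial := by
    intro m hm
    rw [(Nat.not_odd_iff_even.1 hm).neg_pow]
    ring
  calc ∑ m ∈ T, x ^ m / m.factorial
      = ∑ m ∈ T, (x ^ m / m.factorial + (-x) ^ m / m.factorial) / 2 :=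
        (Finset.sum_congr rfl fun m hm => (hterm m (hT m hm)).symm)
    _ ≤ ∑' m : ℕ, (x ^ m / m.factorial + (-x) ^ m / m.factorial) / 2 := by
        apply Summable.sum_le_tsum T
        · intro m _
          have hfac : (0:ℝ) < m.factorial := by positivity
          have := hpow m
          have hle : -(x ^ m / (m.factorial : ℝ)) ≤ (-x) ^ m / m.factorial := by
            rw [← neg_div]
            exact (div_le_div_iff_of_pos_right hfac).2 (hpow m)
          have hx' : (0:ℝ) ≤ x ^ m / m.factorial := by positivity
          linarith
        · exact (h1.add h2).div_const 2

end StanleyAux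

open StanleyAux in
/-- **Stanley's M-bound**: for vertices `u, v` of `Q_n` at Hamming distance `d ≤ n` and any real
`x > 0`, the number `M_{n,l,d}` of walks of length `l` from `u` to `v` satisfies
`M_{n,l,d} ≤ sinh(x)^d · cosh(x)^{n−d} · l! / x^l`. -/
theorem stanley_M_bound (n l d : ℕ) (hd : d ≤ n) (u v : Fin n → Bool)
    (huv : hammingDist u v = d) (x : ℝ) (hx : 0 < x) :
    (walkCount n l u v : ℝ) ≤
      Real.sinh x ^ d * Real.cosh x ^ (n - d) * (l.factorial : ℝ) / x ^ l := by
  classical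
  set D : Finset (Fin n) := Finset.univ.filter fun j => u j ≠ v j with hDdef
  have hD : D.card = d := huv
  have hxl : (0:ℝ) < x ^ l := pow_pos hx l
  have hfac : (0:ℝ) < l.factorial := by positivity
  have key : (walkCount n l u v : ℝ) * x ^ l / l.factorial ≤
      Real.sinh x ^ d * Real.cosh x ^ (n - d) := by
    rw [walkCount_eq]
    set T : Fin n → Finset ℕ :=
      fun i => (Finset.range (l+1)).filter fun m => (Odd m ↔ i ∈ D) with hTdef
    have hK : ∀ k ∈ (Finset.piAntidiag (Finset.univ : Finset (Fin n)) l).filter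
        (fun k => (Finset.univ.filter fun i => Odd (k i)) = D),
        ∑ i, k i = l ∧ ∀ i, (Odd (k i) ↔ i ∈ D) := by
      intro k hk
      rw [Finset.mem_filter, Finset.mem_piAntidiag] at hk
      refine ⟨hk.1.1, fun i => ?_⟩
      have := Finset.ext_iff.1 hk.2 i
      simpa using this
    calc (∑ k ∈ Finset.piAntidiag (Finset.univ : Finset (Fin n)) l,
            (Nat.multinomial Finset.univ k : ℝ) *
              (if (Finset.univ.filter fun i => Odd (k i)) = D then 1 else 0)) * x ^ l
            / l.factorial
        = ∑ k ∈ (Finset.piAntidiag (Finset.univ : Finset (Fin n)) l).filter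
            (fun k => (Finset.univ.filter fun i => Odd (k i)) = D),
            (Nat.multinomial Finset.univ k : ℝ) * x ^ l / l.factorial := by
          rw [Finset.sum_mul, Finset.sum_div, Finset.sum_filter]
          apply Finset.sum_congr rfl
          intro k _
          by_cases h : (Finset.univ.filter fun i => Odd (k i)) = D <;> simp [h]
      _ = ∑ k ∈ (Finset.piAntidiag (Finset.univ : Finset (Fin n)) l).filter
            (fun k => (Finset.univ.filter fun i => Odd (k i)) = D),
            ∏ i, x ^ (k i) / ((k i).factorial : ℝ) := by
          apply Finset.sum_congr rfl
          intro k hk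
          obtain ⟨hsum, -⟩ := hK k hk
          have hprodfac : (∏ i, ((k i).factorial : ℝ)) ≠ 0 := by positivity
          have hmult : (Nat.multinomial Finset.univ k : ℝ) *
              (∏ i, ((k i).factorial : ℝ)) = l.factorial := by
            rw [mul_comm]
            have := Nat.multinomial_spec (Finset.univ : Finset (Fin n)) k
            rw [hsum] at this
            exact_mod_cast congrArg (Nat.cast (R := ℝ)) this
          rw [Finset.prod_div_distrib, Finset.prod_pow_eq_pow_sum, hsum]
          rw [div_eq_div_iff (ne_of_gt hfac) hprodfac]
          linear_combination x ^ l * hmult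
      _ ≤ ∑ k ∈ Fintype.piFinset T, ∏ i, x ^ (k i) / ((k i).factorial : ℝ) := by
          apply Finset.sum_le_sum_of_subset_of_nonneg
          · intro k hk
            obtain ⟨hsum, hpar⟩ := hK k hk
            rw [Fintype.mem_piFinset]
            intro i
            rw [hTdef, Finset.mem_filter, Finset.mem_range]
            constructor
            · have : k i ≤ ∑ j, k j :=
                Finset.single_le_sum (fun j _ => Nat.zero_le _) (Finset.mem_univ i)
              omega
            · exact hpar i
          · intro k _ _
            apply Finset.prod_nonneg
            intro i _
            positivity
      _ = ∏ i, ∑ m ∈ T i, x ^ m / (m.factorial : ℝ) :=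
          (Finset.prod_univ_sum T fun _ m => x ^ m / (m.factorial : ℝ)).symm
      _ ≤ ∏ i, (if i ∈ D then Real.sinh x else Real.cosh x) := by
          apply Finset.prod_le_prod
          · intro i _
            apply Finset.sum_nonneg
            intro m _
            positivity
          · intro i _
            by_cases hi : i ∈ D
            · rw [if_pos hi]
              apply sum_le_sinh hx.le
              intro m hm
              rw [hTdef, Finset.mem_filter] at hm
              exact hm.2.2 hi
            · rw [if_neg hi]
              apply sum_le_cosh hx.le
              intro m hm
              rw [hTdef, Finset.mem_filter] at hm
              intro hodd
              exact hi (hm.2.1 hodd)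
      _ = Real.sinh x ^ d * Real.cosh x ^ (n - d) := by
          rw [Finset.prod_ite (fun _ => Real.sinh x) (fun _ => Real.cosh x),
            Finset.prod_const, Finset.prod_const]
          have h1 : Finset.univ.filter (fun i : Fin n => i ∈ D) = D := by
            ext i; simp
          have h2 := Finset.card_filter_add_card_filter_not
            (s := (Finset.univ : Finset (Fin n))) (p := fun i => i ∈ D)
          rw [h1] at h2 ⊢
          rw [Finset.card_univ, Fintype.card_fin] at h2
          have h3 : (Finset.univ.filter fun i : Fin n => ¬ i ∈ D).card = n - d := by omega
          rw [hD, h3]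
  rw [le_div_iff₀ hxl]
  exact (div_le_iff₀ hfac).1 key
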